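/- If Cov(Y(t), T | X) = 0 almost surely (unconfoundedness), then for any measurable reduction d, Cov(Y(t), T | d(X)) = Cov(m_t(X), e(X) | d(X)) almost surely, where m_t(X) = E[Y(t)|X] and e(X) = E[T|X]. -/

import Mathlib

open MeasureTheory ProbabilityTheory

/-- Conditional covariance given a sub-σ-algebra `m`:
`Cov(A, B | m) = E[A·B | m] - E[A | m] · E[B | m]`. -/
noncomputable def condCov {Ω : Type*} [mΩ : MeasurableSpace Ω] (μ : Measure Ω)
    (m : MeasurableSpace Ω) (A B : Ω → ℝ) : Ω → ℝ :=
  fun ω => condExp m μ (fun ω' => A ω' * B ω') ω - condExp m μ A ω * condExp m μ B ω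

/-- If `Cov(Y(t), T | X) = 0` a.s. (unconfoundedness), then for any measurable reduction `d`,
`Cov(Y(t), T | d(X)) = Cov(m_t(X), e(X) | d(X))` a.s., where `m_t(X) = E[Y(t)|X]` and
`e(X) = E[T|X]`. -/
theorem reduction_bias_identification
    {Ω α β : Type*} [MeasurableSpace Ω] [MeasurableSpace α] [MeasurableSpace β]
    (μ : Measure Ω) [IsProbabilityMeasure μ]
    (X : Ω → α) (d : α → β) (Yt T : Ω → ℝ)
    (hX : Measurable X) (hd : Measurable d)
    (hYt : MemLp Yt 2 μ) (hT : MemLp T 2 μ)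
    (h_unconf : condCov μ (MeasurableSpace.comap X inferInstance) Yt T =ᵐ[μ] fun _ => 0) :
    condCov μ (MeasurableSpace.comap (d ∘ X) inferInstance) Yt T
      =ᵐ[μ]
    condCov μ (MeasurableSpace.comap (d ∘ X) inferInstance)
      (condExp (MeasurableSpace.comap X inferInstance) μ Yt)
      (condExp (MeasurableSpace.comap X inferInstance) μ T) := by
  set mX := MeasurableSpace.comap X inferInstance with hmX
  set m2 := MeasurableSpace.comap (d ∘ X) inferInstance with hm2
  have hXΩ := hX.comap_le
  have h2X : m2 ≤ mX := by
    rw [hm2, hmX, ← MeasurableSpace.comap_comp]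
    exact MeasurableSpace.comap_mono hd.comap_le
  -- integrability of the product
  have hmul : Integrable (fun ω => Yt ω * T ω) μ := by
    have h := hT.smul (φ := Yt) (r := 1) hYt
      (hpqr := ⟨(by norm_num [ENNReal.inv_two_add_inv_two] : (2 : ENNReal)⁻¹ + 2⁻¹ = 1⁻¹)⟩)
    have : MemLp (fun ω => Yt ω * T ω) 1 μ := by
      exact h
    exact memLp_one_iff_integrable.mp this
  -- unconfoundedness as an a.e. equality
  have h_eq : condExp mX μ (fun ω => Yt ω * T ω)
      =ᵐ[μ] fun ω => condExp mX μ Yt ω * condExp mX μ T ω := by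
    filter_upwards [h_unconf] with ω hω
    have : condExp mX μ (fun ω' => Yt ω' * T ω') ω
        - condExp mX μ Yt ω * condExp mX μ T ω = 0 := hω
    linarith
  -- tower property for the product term
  have h1 : condExp m2 μ (fun ω => Yt ω * T ω)
      =ᵐ[μ] condExp m2 μ (fun ω => condExp mX μ Yt ω * condExp mX μ T ω) := by
    calc condExp m2 μ (fun ω => Yt ω * T ω)
        =ᵐ[μ] condExp m2 μ (condExp mX μ (fun ω => Yt ω * T ω)) :=
          (condExp_condExp_of_le h2X hXΩ).symm
      _ =ᵐ[μ] condExp m2 μ (fun ω => condExp mX μ Yt ω * condExp mX μ T ω) :=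
          condExp_congr_ae h_eq
  have h2 : condExp m2 μ Yt =ᵐ[μ] condExp m2 μ (condExp mX μ Yt) :=
    (condExp_condExp_of_le h2X hXΩ).symm
  have h3 : condExp m2 μ T =ᵐ[μ] condExp m2 μ (condExp mX μ T) :=
    (condExp_condExp_of_le h2X hXΩ).symm
  filter_upwards [h1, h2, h3] with ω hω1 hω2 hω3
  simp only [condCov, hω1, hω2, hω3]
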